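/- Let S be a complete RN module over ℝ with base (Ω, F, P) and suppose Rank_E(S) ≥ 2 for some E ∈ F̃ with E ⊂ H(S) and P(E) > 0. Then there exists a unique G ∈ F̃ with E ⊂ G ⊂ H(S) and P(G) > 0 such that Rank_G(S) ≥ 2 and Rank_D(S) < 2 for every D ∈ F̃ with D ⊂ H(S)\G and P(D) > 0. -/

import Mathlib

open MeasureTheory Filter Set

noncomputable section

namespace RNM

variable {Ω : Type*} [MeasurableSpace Ω]

/-- `L⁰(F, ℝ)`: equivalence classes of real random variables mod a.e. equality. -/
abbrev L0 (μ : Measure Ω) : Type _ := Ω →ₘ[μ] ℝ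

open Classical in
/-- The equivalence class of the indicator function of a (measurable) set. -/
noncomputable def ind (μ : Measure Ω) (A : Set Ω) : L0 μ :=
  if h : MeasurableSet A then
    AEEqFun.mk (A.indicator fun _ => (1 : ℝ)) (aestronglyMeasurable_const.indicator h)
  else 0

/-- The constant function, as an element of `L⁰`. -/
noncomputable def cst (μ : Measure Ω) (r : ℝ) : L0 μ := AEEqFun.const Ω r

/-- `A ⊂ B` modulo null sets. -/
def aeSub (μ : Measure Ω) (A B : Set Ω) : Prop := μ (A \ B) = 0

/-- `A = B` modulo null sets. -/
def aeEqS (μ : Measure Ω) (A B : Set Ω) : Prop := μ ((A \ B) ∪ (B \ A)) = 0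

variable {μ : Measure Ω} {S : Type*} [AddCommGroup S]

/-- The axioms of a random normed module over ℝ with base `(Ω, F, μ)`: `S` is a left module
over the algebra `L⁰(F,ℝ)` (with module multiplication `sm`) and `nrm` is an `L⁰`-norm. -/
structure IsRNModule (μ : Measure Ω) (sm : L0 μ → S → S) (nrm : S → L0 μ) : Prop where
  smul_add : ∀ ξ x y, sm ξ (x + y) = sm ξ x + sm ξ y
  add_smul : ∀ ξ η x, sm (ξ + η) x = sm ξ x + sm η x
  mul_smul : ∀ ξ η x, sm (ξ * η) x = sm ξ (sm η x)
  one_smul : ∀ x, sm 1 x = x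
  nrm_nonneg : ∀ x, 0 ≤ nrm x
  nrm_smul : ∀ ξ x, nrm (sm ξ x) = |ξ| * nrm x
  nrm_add : ∀ x y, nrm (x + y) ≤ nrm x + nrm y
  nrm_eq_zero : ∀ x, nrm x = 0 → x = 0

/-- `x` and `y` are `L⁰`-independent on `F`. -/
def Indep (sm : L0 μ → S → S) (x y : S) (F : Set Ω) : Prop :=
  ∀ ξ η : L0 μ, sm (ξ * ind μ F) x + sm (η * ind μ F) y = 0 →
    ξ * ind μ F = 0 ∧ η * ind μ F = 0

/-- `Rank_D(S) ≥ 2`. -/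
def RankGe2 (sm : L0 μ → S → S) (D : Set Ω) : Prop := ∃ x y : S, Indep sm x y D

/-- `A_x = [‖x‖ > 0]`. -/
def Aset (nrm : S → L0 μ) (x : S) : Set Ω := {ω | 0 < (nrm x) ω}

/-- `A_{xy} = A_x ∩ A_y`. -/
def Axy (nrm : S → L0 μ) (x y : S) : Set Ω := Aset nrm x ∩ Aset nrm y

/-- `B_{xy} = A_{xy} ∩ A_{x-y}`. -/
def Bxy (nrm : S → L0 μ) (x y : S) : Set Ω := Axy nrm x y ∩ Aset nrm (x - y)

/-- `H` is (a representative of) the support `H(S) = [⋁{‖x‖ : x ∈ S} > 0]`. -/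
def IsSupport (nrm : S → L0 μ) (H : Set Ω) : Prop :=
  MeasurableSet H ∧ (∀ x : S, aeSub μ (Aset nrm x) H) ∧
    ∀ B : Set Ω, MeasurableSet B → aeSub μ B H → 0 < μ B →
      ∃ x : S, 0 < μ (B ∩ Aset nrm x)

/-- A sequence in `S` is Cauchy for the topology of convergence in probability. -/
def CauchyInProb (μ : Measure Ω) (nrm : S → L0 μ) (u : ℕ → S) : Prop :=
  ∀ ε : ℝ, 0 < ε →
    Tendsto (fun p : ℕ × ℕ => μ {ω | ε ≤ |(nrm (u p.1 - u p.2)) ω|}) atTop (nhds 0)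

/-- `u n → x` in probability (i.e. `‖u n - x‖ → 0` in probability). -/
def TendstoInProb (μ : Measure Ω) (nrm : S → L0 μ) (u : ℕ → S) (x : S) : Prop :=
  ∀ ε : ℝ, 0 < ε →
    Tendsto (fun n => μ {ω | ε ≤ |(nrm (u n - x)) ω|}) atTop (nhds 0)

/-- Completeness of a random normed module. -/
def CompleteRN (μ : Measure Ω) (nrm : S → L0 μ) : Prop :=
  ∀ u : ℕ → S, CauchyInProb μ nrm u → ∃ x : S, TendstoInProb μ nrm u x

/-- The random unit sphere `S(1)`. -/
def sphere (nrm : S → L0 μ) : Set S :=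
  {x | ∃ A : Set Ω, MeasurableSet A ∧ 0 < μ A ∧ nrm x = ind μ A}

/-- The random closed unit ball `U(1)`. -/
def ball (nrm : S → L0 μ) : Set S := {x | nrm x ≤ 1}

/-- `ε` is an admissible random convexity parameter on `D`: `ε ≥ 0` and `0 < ε ≤ 2` on `D`. -/
def Admissible (μ : Measure Ω) (D : Set Ω) (ε : L0 μ) : Prop :=
  0 ≤ ε ∧ ∀ᵐ ω ∂μ, ω ∈ D → 0 < ε ω ∧ ε ω ≤ 2

/-- midpoint `(x+y)/2`. -/
def mid (μ : Measure Ω) (sm : L0 μ → S → S) (x y : S) : S := sm (cst μ (1/2)) (x + y)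

/-- The set whose infimum (in the a.s. order of `L⁰`) is the modulus of random
convexity `δ_D(ε)`. -/
def modSet (μ : Measure Ω) (sm : L0 μ → S → S) (nrm : S → L0 μ) (D : Set Ω) (ε : L0 μ) :
    Set (L0 μ) :=
  {z | ∃ x ∈ sphere nrm, ∃ y ∈ sphere nrm, aeSub μ D (Bxy nrm x y) ∧
    ε * ind μ D ≤ ind μ D * nrm (x - y) ∧
    z = ind μ D - ind μ D * nrm (mid μ sm x y)}

/-- `S` is random uniformly convex: `δ_{H(S)}(ε) > 0` on `H(S)` for every admissible `ε`. -/
def RandomUniformlyConvex (μ : Measure Ω) (sm : L0 μ → S → S) (nrm : S → L0 μ)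
    (H : Set Ω) : Prop :=
  ∀ ε : L0 μ, Admissible μ H ε → ∀ d : L0 μ, IsGLB (modSet μ sm nrm H ε) d →
    ∀ᵐ ω ∂μ, ω ∈ H → 0 < d ω

/-- `G` is (a representative of) `G(S)`. -/
def IsGSet (μ : Measure Ω) (sm : L0 μ → S → S) (H G : Set Ω) : Prop :=
  MeasurableSet G ∧ aeSub μ G H ∧ 0 < μ G ∧ RankGe2 sm G ∧
    ∀ D : Set Ω, MeasurableSet D → aeSub μ D (H \ G) → 0 < μ D → ¬ RankGe2 sm D


/-- The properties demanded of `G = G(S)` in Proposition 2.2(2) (relative to `E`). -/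
def GSProp (μ : Measure Ω) (sm : L0 μ → S → S) (H E G : Set Ω) : Prop :=
  MeasurableSet G ∧ aeSub μ E G ∧ aeSub μ G H ∧ 0 < μ G ∧ RankGe2 sm G ∧
    ∀ D : Set Ω, MeasurableSet D → aeSub μ D (H \ G) → 0 < μ D → ¬ RankGe2 sm D

-- ### Auxiliary lemmas

section Aux
variable {sm : L0 μ → S → S} {nrm : S → L0 μ}

lemma ind_coe {A : Set Ω} (hA : MeasurableSet A) :
    (ind μ A : Ω → ℝ) =ᵐ[μ] A.indicator 1 := by
  rw [ind, dif_pos hA]; exact AEEqFun.coeFn_mk _ _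

lemma ind_congr {A B : Set Ω} (hA : MeasurableSet A) (hB : MeasurableSet B)
    (h : μ ((A \ B) ∪ (B \ A)) = 0) : ind μ A = ind μ B := by
  apply AEEqFun.ext
  have h0 : ∀ᵐ ω ∂μ, ω ∉ (A \ B) ∪ (B \ A) := measure_eq_zero_iff_ae_notMem.mp h
  filter_upwards [ind_coe hA, ind_coe hB, h0] with ω h1 h2 h3
  rw [h1, h2]
  by_cases hωA : ω ∈ A <;> by_cases hωB : ω ∈ B <;>
    simp_all [Set.indicator_apply]

lemma ind_mul_ind {A B : Set Ω} (hA : MeasurableSet A) (hB : MeasurableSet B) :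
    ind μ A * ind μ B = ind μ (A ∩ B) := by
  apply AEEqFun.ext
  filter_upwards [AEEqFun.coeFn_mul (ind μ A) (ind μ B), ind_coe hA, ind_coe hB,
    ind_coe (hA.inter hB)] with ω h1 h2 h3 h4
  rw [h1, h4]
  simp only [Pi.mul_apply]
  rw [h2, h3]
  by_cases hωA : ω ∈ A <;> by_cases hωB : ω ∈ B <;> simp_all [Set.indicator_apply]

lemma ind_null {A : Set Ω} (hA : MeasurableSet A) (h : μ A = 0) : ind μ A = 0 := by
  apply AEEqFun.ext
  have h0 : ∀ᵐ ω ∂μ, ω ∉ A := measure_eq_zero_iff_ae_notMem.mp h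
  filter_upwards [ind_coe hA, h0, AEEqFun.coeFn_zero (β := ℝ) (μ := μ)] with ω h1 h2 h3
  rw [h1, h3]; simp [Set.indicator_apply, h2]

lemma ind_mul_of_aeSub {A B : Set Ω} (hA : MeasurableSet A) (hB : MeasurableSet B)
    (h : aeSub μ A B) : ind μ A * ind μ B = ind μ A := by
  rw [ind_mul_ind hA hB]
  apply ind_congr (hA.inter hB) hA
  have : ((A ∩ B) \ A) ∪ (A \ (A ∩ B)) = A \ B := by
    ext ω; simp [Set.mem_diff]; tauto
  rw [this]; exact h

lemma sm_zero (hRN : IsRNModule μ sm nrm) (ξ : L0 μ) : sm ξ (0 : S) = 0 := by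
  have h := hRN.smul_add ξ 0 0
  rw [add_zero] at h
  exact (left_eq_add.mp h)

lemma zero_sm (hRN : IsRNModule μ sm nrm) (x : S) : sm (0 : L0 μ) x = 0 := by
  have h := hRN.add_smul 0 0 x
  rw [add_zero] at h
  exact (left_eq_add.mp h)

lemma sm_neg (hRN : IsRNModule μ sm nrm) (ξ : L0 μ) (x : S) : sm ξ (-x) = -sm ξ x := by
  have h := hRN.smul_add ξ x (-x)
  rw [add_neg_cancel, sm_zero hRN] at h
  exact (neg_eq_of_add_eq_zero_right h.symm).symm

lemma sm_sub (hRN : IsRNModule μ sm nrm) (ξ : L0 μ) (x y : S) :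
    sm ξ (x - y) = sm ξ x - sm ξ y := by
  rw [sub_eq_add_neg, hRN.smul_add, sm_neg hRN, sub_eq_add_neg]

lemma neg_one_sm (hRN : IsRNModule μ sm nrm) (x : S) : sm (-1 : L0 μ) x = -x := by
  have h := hRN.add_smul 1 (-1) x
  rw [add_neg_cancel, zero_sm hRN, hRN.one_smul] at h
  exact (neg_eq_of_add_eq_zero_right h.symm).symm

lemma zero_mul0 (a : L0 μ) : (0 : L0 μ) * a = 0 := by
  apply AEEqFun.ext
  filter_upwards [AEEqFun.coeFn_mul (0 : L0 μ) a, AEEqFun.coeFn_zero (β := ℝ) (μ := μ)]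
    with ω h1 h2
  simp only [h1, Pi.mul_apply, h2]
  simp [h2]

lemma mul_zero0 (a : L0 μ) : a * (0 : L0 μ) = 0 := by
  rw [mul_comm]; exact zero_mul0 a

lemma abs_zero0 : |(0 : L0 μ)| = 0 := by
  apply AEEqFun.ext
  filter_upwards [AEEqFun.coeFn_abs (0 : L0 μ), AEEqFun.coeFn_zero (β := ℝ) (μ := μ)]
    with ω h1 h2
  rw [h1]; simp [h2]

lemma abs_neg_one : |(-1 : L0 μ)| = 1 := by
  apply AEEqFun.ext
  filter_upwards [AEEqFun.coeFn_abs (-1 : L0 μ), AEEqFun.coeFn_neg (1 : L0 μ),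
    AEEqFun.coeFn_one (β := ℝ) (μ := μ)] with ω h1 h2 h3
  rw [h1, h2]; simp [h3]

lemma nrm_neg (hRN : IsRNModule μ sm nrm) (x : S) : nrm (-x) = nrm x := by
  rw [← neg_one_sm hRN, hRN.nrm_smul, abs_neg_one, one_mul]

lemma nrm_zero (hRN : IsRNModule μ sm nrm) : nrm (0 : S) = 0 := by
  have h := hRN.nrm_smul 0 (0 : S)
  rw [zero_sm hRN] at h
  calc nrm (0 : S) = |(0 : L0 μ)| * nrm (0 : S) := h
    _ = 0 := by rw [abs_zero0]; exact zero_mul0 _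

lemma add_le_add_left0 {a b : L0 μ} (c : L0 μ) (h : a ≤ b) : c + a ≤ c + b := by
  rw [← AEEqFun.coeFn_le] at h ⊢
  filter_upwards [h, AEEqFun.coeFn_add c a, AEEqFun.coeFn_add c b] with ω h1 h2 h3
  rw [h2, h3]; exact add_le_add le_rfl h1

lemma nrm_sum_le (hRN : IsRNModule μ sm nrm) (s : Finset ℕ) (g : ℕ → S) :
    nrm (∑ i ∈ s, g i) ≤ ∑ i ∈ s, nrm (g i) := by
  classical
  induction s using Finset.induction with
  | empty => simp [nrm_zero hRN]
  | insert j t hj ih =>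
    rw [Finset.sum_insert hj, Finset.sum_insert hj]
    exact le_trans (hRN.nrm_add _ _) (add_le_add_left0 _ ih)

lemma indep_restrict (hRN : IsRNModule μ sm nrm) {x y : S} {D D' : Set Ω}
    (hD : MeasurableSet D) (hD' : MeasurableSet D') (hsub : aeSub μ D' D)
    (h : Indep sm x y D) : Indep sm x y D' := by
  have hii : ind μ D' * ind μ D = ind μ D' := ind_mul_of_aeSub hD' hD hsub
  intro ξ η h0
  have h1 : sm ((ξ * ind μ D') * ind μ D) x + sm ((η * ind μ D') * ind μ D) y = 0 := by
    rw [mul_assoc, mul_assoc, hii]; exact h0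
  obtain ⟨h2, h3⟩ := h _ _ h1
  rw [mul_assoc, hii] at h2 h3
  exact ⟨h2, h3⟩

lemma add_le_add0 {a b c d : L0 μ} (h1 : a ≤ b) (h2 : c ≤ d) : a + c ≤ b + d := by
  rw [← AEEqFun.coeFn_le] at h1 h2 ⊢
  filter_upwards [h1, h2, AEEqFun.coeFn_add a c, AEEqFun.coeFn_add b d] with ω g1 g2 g3 g4
  rw [g3, g4]; exact add_le_add g1 g2

lemma sum_le_sum0 (s : Finset ℕ) (f g : ℕ → L0 μ) (h : ∀ i, f i ≤ g i) :
    ∑ i ∈ s, f i ≤ ∑ i ∈ s, g i := by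
  classical
  induction s using Finset.induction with
  | empty => simp
  | insert j t hj ih =>
    rw [Finset.sum_insert hj, Finset.sum_insert hj]
    exact add_le_add0 (h j) ih

lemma coeFn_sum0 (s : Finset ℕ) (f : ℕ → L0 μ) :
    (↑(∑ i ∈ s, f i) : Ω → ℝ) =ᵐ[μ] fun ω => ∑ i ∈ s, (f i : Ω → ℝ) ω := by
  classical
  induction s using Finset.induction with
  | empty => simp only [Finset.sum_empty]; exact AEEqFun.coeFn_zero
  | insert j t hj ih =>
    rw [Finset.sum_insert hj]
    filter_upwards [AEEqFun.coeFn_add (f j) (∑ i ∈ t, f i), ih] with ω h1 h2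
    rw [h1, Pi.add_apply, h2, Finset.sum_insert hj]

lemma sm_sum (hRN : IsRNModule μ sm nrm) (ξ : L0 μ) (s : Finset ℕ) (g : ℕ → S) :
    sm ξ (∑ i ∈ s, g i) = ∑ i ∈ s, sm ξ (g i) := by
  classical
  induction s using Finset.induction with
  | empty => simp [sm_zero hRN]
  | insert j t hj ih =>
    rw [Finset.sum_insert hj, Finset.sum_insert hj, hRN.smul_add, ih]

lemma nrm_nonneg_ae (hRN : IsRNModule μ sm nrm) (x : S) : ∀ᵐ ω ∂μ, 0 ≤ (nrm x : Ω → ℝ) ω := by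
  have h := (AEEqFun.coeFn_le ).mpr (hRN.nrm_nonneg x)
  filter_upwards [h, AEEqFun.coeFn_zero (β := ℝ) (μ := μ)] with ω h1 h2
  rw [h2, Pi.zero_apply] at h1; exact h1

lemma exists_localized_limit (hRN : IsRNModule μ sm nrm) (hcomp : CompleteRN μ nrm)
    [IsFiniteMeasure μ] {F : ℕ → Set Ω} (hFm : ∀ n, MeasurableSet (F n))
    (hd : Pairwise (Function.onFun Disjoint F)) (z : ℕ → S)
    (h1 : ∀ n, sm (ind μ (F n)) (z n) = z n)
    (h2 : ∀ n, nrm (z n) ≤ ind μ (F n)) :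
    ∃ x : S, ∀ j, sm (ind μ (F j)) x = z j := by
  classical
  set u : ℕ → S := fun N => ∑ n ∈ Finset.range N, z n with hu
  set T : ℕ → Set Ω := fun M => ⋃ k, F (k + M) with hT
  have hTanti : ∀ {M M' : ℕ}, M ≤ M' → T M' ⊆ T M := by
    intro M M' hMM'
    apply Set.iUnion_subset
    intro k
    have : k + M' = (k + (M' - M)) + M := by omega
    rw [this]
    exact Set.subset_iUnion (fun k => F (k + M)) (k + (M' - M))
  have htsum : ∑' n, μ (F n) ≠ ⊤ := by
    rw [← measure_iUnion hd hFm]; exact measure_ne_top μ _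
  have htail0 : Tendsto (fun M => μ (T M)) atTop (nhds 0) := by
    refine tendsto_of_tendsto_of_tendsto_of_le_of_le tendsto_const_nhds
      (ENNReal.tendsto_sum_nat_add (fun n => μ (F n)) htsum)
      (fun M => zero_le) (fun M => measure_iUnion_le _)
  -- key bound
  have hclaim : ∀ M N : ℕ, M ≤ N →
      nrm (u N - u M) ≤ ∑ n ∈ Finset.Ico M N, ind μ (F n) := by
    intro M N hMN
    have e : ∑ n ∈ Finset.Ico M N, z n = u N - u M := Finset.sum_Ico_eq_sub z hMN
    rw [← e]
    exact le_trans (nrm_sum_le hRN _ _) (sum_le_sum0 _ _ _ h2)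
  have hbound : ∀ (M N : ℕ) (ε : ℝ), 0 < ε →
      μ {ω | ε ≤ |(nrm (u M - u N) : Ω → ℝ) ω|} ≤ μ (T (min M N)) := by
    have key : ∀ (M N : ℕ), M ≤ N → ∀ (ε : ℝ), 0 < ε →
        μ {ω | ε ≤ |(nrm (u N - u M) : Ω → ℝ) ω|} ≤ μ (T M) := by
      intro M N hMN ε hε
      apply measure_mono_ae
      have hle := (AEEqFun.coeFn_le).mpr (hclaim M N hMN)
      filter_upwards [hle, coeFn_sum0 (Finset.Ico M N) (fun n => ind μ (F n)),
        nrm_nonneg_ae hRN (u N - u M),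
        ae_all_iff.mpr (fun n => ind_coe (μ := μ) (hFm n))] with ω g1 g2 g3 g4
      intro hω
      replace hω : ε ≤ |(nrm (u N - u M) : Ω → ℝ) ω| := hω
      rw [abs_of_nonneg g3] at hω
      have hsum : ε ≤ ∑ n ∈ Finset.Ico M N, (F n).indicator (1 : Ω → ℝ) ω := by
        calc ε ≤ (nrm (u N - u M) : Ω → ℝ) ω := hω
        _ ≤ _ := by rw [g2] at g1; exact le_trans g1 (le_of_eq (Finset.sum_congr rfl
              (fun n _ => g4 n)))
      by_contra hmem
      have : ∀ n ∈ Finset.Ico M N, (F n).indicator (1 : Ω → ℝ) ω = 0 := by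
        intro n hn
        have hωn : ω ∉ F n := by
          intro hc
          apply hmem
          have hnM : M ≤ n := (Finset.mem_Ico.mp hn).1
          have : n = (n - M) + M := by omega
          exact Set.mem_iUnion.mpr ⟨n - M, by rw [← this]; exact hc⟩
        simp [Set.indicator_of_notMem hωn]
      rw [Finset.sum_eq_zero this] at hsum
      linarith
    intro M N ε hε
    rcases le_total M N with h | h
    · rw [min_eq_left h]
      have e : u M - u N = -(u N - u M) := by abel
      rw [e, nrm_neg hRN]
      exact key M N h ε hε
    · rw [min_eq_right h]; exact key N M h ε hε
  have hcauchy : CauchyInProb μ nrm u := by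
    intro ε hε
    rw [ENNReal.tendsto_nhds_zero]
    intro δ hδ
    obtain ⟨M₀, hM₀⟩ := (Filter.eventually_atTop).mp ((ENNReal.tendsto_nhds_zero.mp htail0) δ hδ)
    have hev : ∀ᶠ p : ℕ × ℕ in atTop, (M₀, M₀) ≤ p := Filter.eventually_ge_atTop _
    filter_upwards [hev] with p hp
    calc μ {ω | ε ≤ |(nrm (u p.1 - u p.2) : Ω → ℝ) ω|} ≤ μ (T (min p.1 p.2)) :=
          hbound p.1 p.2 ε hε
    _ ≤ μ (T M₀) := measure_mono (hTanti (le_min hp.1 hp.2))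
    _ ≤ δ := hM₀ M₀ le_rfl
  obtain ⟨x, hx⟩ := hcomp u hcauchy
  refine ⟨x, fun j => ?_⟩
  have hloc : ∀ N, j < N → sm (ind μ (F j)) (u N) = z j := by
    intro N hN
    rw [hu]
    simp only
    rw [sm_sum hRN]
    have e : ∑ i ∈ Finset.range N, sm (ind μ (F j)) (z i) = sm (ind μ (F j)) (z j) := by
      apply Finset.sum_eq_single_of_mem j (Finset.mem_range.mpr hN)
      intro n _ hnj
      rw [← h1 n, ← hRN.mul_smul, ind_mul_ind (hFm j) (hFm n)]
      have hFjn : F j ∩ F n = ∅ := Set.disjoint_iff_inter_eq_empty.mp (hd (Ne.symm hnj))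
      rw [hFjn, ind_null MeasurableSet.empty (measure_empty), zero_sm hRN]
    rw [e, h1 j]
  -- conclude sm (ind (F j)) x = z j
  · set a : S := sm (ind μ (F j)) x - z j with haa
    have ha : ∀ N, j < N → a = sm (ind μ (F j)) (x - u N) := by
      intro N hN
      rw [sm_sub hRN, hloc N hN, haa]
    have hzero : ∀ ε : ℝ, 0 < ε → μ {ω | ε ≤ |(nrm a : Ω → ℝ) ω|} = 0 := by
      intro ε hε
      have hub : ∀ N, j < N →
          μ {ω | ε ≤ |(nrm a : Ω → ℝ) ω|} ≤ μ {ω | ε ≤ |(nrm (u N - x) : Ω → ℝ) ω|} := by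
        intro N hN
        apply measure_mono_ae
        have hna : nrm a = |ind μ (F j)| * nrm (x - u N) := by
          rw [ha N hN, hRN.nrm_smul]
        have hxu : nrm (x - u N) = nrm (u N - x) := by
          have : x - u N = -(u N - x) := by abel
          rw [this, nrm_neg hRN]
        rw [hxu] at hna
        filter_upwards [AEEqFun.coeFn_mul |ind μ (F j)| (nrm (u N - x)),
          AEEqFun.coeFn_abs (ind μ (F j)), ind_coe (μ := μ) (hFm j)] with ω g1 g2 g3
        intro hω
        replace hω : ε ≤ |(nrm a : Ω → ℝ) ω| := hω
        show ε ≤ |(nrm (u N - x) : Ω → ℝ) ω|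
        rw [hna, g1] at hω
        simp only [Pi.mul_apply] at hω
        rw [g2, g3, abs_mul, abs_abs] at hω
        have hi : |(F j).indicator (1 : Ω → ℝ) ω| ≤ 1 := by
          by_cases hc : ω ∈ F j <;> simp [Set.indicator_apply, hc]
        calc ε ≤ |(F j).indicator (1:Ω→ℝ) ω| * |(nrm (u N - x) : Ω → ℝ) ω| := hω
        _ ≤ |(nrm (u N - x) : Ω → ℝ) ω| := mul_le_of_le_one_left (abs_nonneg _) hi
      have := ge_of_tendsto (hx ε hε)
        (Filter.eventually_atTop.mpr ⟨j + 1, fun N hN => hub N (by omega)⟩)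
      exact le_antisymm this zero_le
    have hae : ∀ᵐ ω ∂μ, (nrm a : Ω → ℝ) ω = 0 := by
      have hsub : {ω | (nrm a : Ω → ℝ) ω ≠ 0} ⊆
          ⋃ k : ℕ, {ω | (1:ℝ)/(k+1) ≤ |(nrm a : Ω → ℝ) ω|} := by
        intro ω hω
        obtain ⟨k, hk⟩ := exists_nat_one_div_lt (abs_pos.mpr hω)
        exact Set.mem_iUnion.mpr ⟨k, le_of_lt hk⟩
      have hz : μ (⋃ k : ℕ, {ω | (1:ℝ)/(k+1) ≤ |(nrm a : Ω → ℝ) ω|}) = 0 :=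
        measure_iUnion_null (fun k => hzero _ (by positivity))
      have : μ {ω | (nrm a : Ω → ℝ) ω ≠ 0} = 0 := measure_mono_null hsub hz
      filter_upwards [measure_eq_zero_iff_ae_notMem.mp this] with ω hω
      simpa using hω
    have : nrm a = 0 := by
      apply AEEqFun.ext
      filter_upwards [hae, AEEqFun.coeFn_zero (β := ℝ) (μ := μ)] with ω g1 g2
      rw [g1, g2, Pi.zero_apply]
    have := hRN.nrm_eq_zero a this
    rw [haa] at this
    exact sub_eq_zero.mp this

lemma rankGe2_iUnion_disjoint (hRN : IsRNModule μ sm nrm) (hcomp : CompleteRN μ nrm)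
    [IsFiniteMeasure μ] {F : ℕ → Set Ω} (hFm : ∀ n, MeasurableSet (F n))
    (hd : Pairwise (Function.onFun Disjoint F))
    (hxy : ∀ n, ∃ x y : S, Indep sm x y (F n)) : RankGe2 sm (⋃ n, F n) := by
  classical
  choose xn yn hind using hxy
  have hUm : MeasurableSet (⋃ n, F n) := MeasurableSet.iUnion hFm
  -- normalizing factors
  have hmeas : ∀ w : S, AEStronglyMeasurable (fun ω => (1 + |(nrm w : Ω → ℝ) ω|)⁻¹) μ := by
    intro w
    have h0 : AEMeasurable (fun ω => |(nrm w : Ω → ℝ) ω|) μ := by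
      have h1 := (nrm w).aestronglyMeasurable.aemeasurable
      exact (h1.max h1.neg).congr (Filter.Eventually.of_forall
        (fun ω => (abs_eq_max_neg (a := (nrm w : Ω → ℝ) ω)).symm))
    exact ((aemeasurable_const.add h0).inv).aestronglyMeasurable
  let q : S → L0 μ := fun w => AEEqFun.mk _ (hmeas w)
  have hq : ∀ w : S, (q w : Ω → ℝ) =ᵐ[μ] fun ω => (1 + |(nrm w : Ω → ℝ) ω|)⁻¹ :=
    fun w => AEEqFun.coeFn_mk _ _
  -- localized normalized elements
  have main : ∀ w : ℕ → S, (∀ n, Indep sm (w n) (yn n) (F n) ∨ True) →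
      ∃ x : S, ∀ j, sm (ind μ (F j)) x = sm (ind μ (F j) * q (w j)) (w j) := by
    intro w _
    apply exists_localized_limit hRN hcomp hFm hd
    · -- h1
      intro n
      rw [← hRN.mul_smul, ← mul_assoc, ind_mul_ind (hFm n) (hFm n), Set.inter_self]
    · -- h2
      intro n
      rw [hRN.nrm_smul]
      rw [← AEEqFun.coeFn_le]
      filter_upwards [AEEqFun.coeFn_mul |ind μ (F n) * q (w n)| (nrm (w n)),
        AEEqFun.coeFn_abs (ind μ (F n) * q (w n)),
        AEEqFun.coeFn_mul (ind μ (F n)) (q (w n)), ind_coe (μ := μ) (hFm n),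
        hq (w n), nrm_nonneg_ae hRN (w n)] with ω g1 g2 g3 g4 g5 g6
      rw [g1, Pi.mul_apply, g2, g3, Pi.mul_apply, g4, g5]
      set t := (nrm (w n) : Ω → ℝ) ω with ht
      by_cases hc : ω ∈ F n
      · rw [Set.indicator_of_mem hc]
        simp only [Pi.one_apply, one_mul]
        have hpos : (0:ℝ) < 1 + |t| := by positivity
        rw [abs_of_nonneg (le_of_lt (inv_pos.mpr hpos))]
        calc (1 + |t|)⁻¹ * t ≤ (1 + |t|)⁻¹ * (1 + |t|) := by
              apply mul_le_mul_of_nonneg_left _ (le_of_lt (inv_pos.mpr hpos))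
              linarith [le_abs_self t]
        _ = 1 := inv_mul_cancel₀ (ne_of_gt hpos)
      · rw [Set.indicator_of_notMem hc]
        simp
  obtain ⟨x, hx⟩ := main xn (fun n => Or.inr trivial)
  obtain ⟨y, hy⟩ := main yn (fun n => Or.inr trivial)
  refine ⟨x, y, ?_⟩
  intro ξ η h0
  set U := ⋃ n, F n with hU
  have hjU : ∀ j, ind μ (F j) * ind μ U = ind μ (F j) := by
    intro j
    apply ind_mul_of_aeSub (hFm j) hUm
    have : F j \ U = ∅ := Set.diff_eq_empty.mpr (Set.subset_iUnion F j)
    rw [aeSub, this, measure_empty]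
  -- Step A: for each j, localized coefficients vanish
  have hA : ∀ j, (ξ * q (xn j)) * ind μ (F j) = 0 ∧ (η * q (yn j)) * ind μ (F j) = 0 := by
    intro j
    have e := congrArg (sm (ind μ (F j))) h0
    rw [sm_zero hRN, hRN.smul_add, ← hRN.mul_smul, ← hRN.mul_smul] at e
    have c1 : ind μ (F j) * (ξ * ind μ U) = ξ * ind μ (F j) := by
      rw [mul_comm (ind μ (F j)) _, mul_assoc, mul_comm (ind μ U) _, hjU]
    have c2 : ind μ (F j) * (η * ind μ U) = η * ind μ (F j) := by
      rw [mul_comm (ind μ (F j)) _, mul_assoc, mul_comm (ind μ U) _, hjU]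
    rw [c1, c2] at e
    have d1 : sm (ξ * ind μ (F j)) x = sm ((ξ * q (xn j)) * ind μ (F j)) (xn j) := by
      rw [hRN.mul_smul, hx j, ← hRN.mul_smul]
      congr 1
      rw [mul_assoc, mul_comm (q (xn j)) _]
    have d2 : sm (η * ind μ (F j)) y = sm ((η * q (yn j)) * ind μ (F j)) (yn j) := by
      rw [hRN.mul_smul, hy j, ← hRN.mul_smul]
      congr 1
      rw [mul_assoc, mul_comm (q (yn j)) _]
    rw [d1, d2] at e
    exact hind j _ _ e
  -- Step B: deduce ξ * ind (F j) = 0 pointwise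
  have hB : ∀ (ζ : L0 μ) (v : ℕ → S),
      (∀ j, (ζ * q (v j)) * ind μ (F j) = 0) → ζ * ind μ U = 0 := by
    intro ζ v hz
    have hBj : ∀ j, ∀ᵐ ω ∂μ, (ζ : Ω → ℝ) ω * (F j).indicator (1 : Ω → ℝ) ω = 0 := by
      intro j
      have hcz : (((ζ * q (v j)) * ind μ (F j) : L0 μ) : Ω → ℝ) =ᵐ[μ] (0 : Ω → ℝ) := by
        rw [hz j]; exact AEEqFun.coeFn_zero
      filter_upwards [hcz, AEEqFun.coeFn_mul (ζ * q (v j)) (ind μ (F j)),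
        AEEqFun.coeFn_mul ζ (q (v j)), ind_coe (μ := μ) (hFm j), hq (v j)]
        with ω g1 g2 g3 g4 g5
      rw [g2, Pi.mul_apply, g3, Pi.mul_apply, g4, g5] at g1
      simp only [Pi.zero_apply] at g1
      rcases mul_eq_zero.mp g1 with h | h
      · rcases mul_eq_zero.mp h with h' | h'
        · rw [h', zero_mul]
        · exfalso
          have : (0:ℝ) < 1 + |(nrm (v j) : Ω → ℝ) ω| := by positivity
          exact (ne_of_gt (inv_pos.mpr this)) h'
      · rw [h, mul_zero]
    apply AEEqFun.ext
    filter_upwards [AEEqFun.coeFn_mul ζ (ind μ U), ind_coe (μ := μ) hUm,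
      ae_all_iff.mpr hBj, AEEqFun.coeFn_zero (β := ℝ) (μ := μ)] with ω g1 g2 g3 g4
    rw [g1, Pi.mul_apply, g2, g4, Pi.zero_apply]
    by_cases hω : ω ∈ U
    · obtain ⟨j, hj⟩ := Set.mem_iUnion.mp hω
      have := g3 j
      rw [Set.indicator_of_mem hj] at this
      simp only [Pi.one_apply, mul_one] at this
      rw [this, zero_mul]
    · rw [Set.indicator_of_notMem hω, mul_zero]
  exact ⟨hB ξ xn (fun j => (hA j).1), hB η yn (fun j => (hA j).2)⟩

lemma rankGe2_iUnion (hRN : IsRNModule μ sm nrm) (hcomp : CompleteRN μ nrm)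
    [IsFiniteMeasure μ] {G : ℕ → Set Ω} (hGm : ∀ n, MeasurableSet (G n))
    (hrk : ∀ n, RankGe2 sm (G n)) : RankGe2 sm (⋃ n, G n) := by
  rw [← iUnion_disjointed]
  apply rankGe2_iUnion_disjoint hRN hcomp (MeasurableSet.disjointed hGm)
    (disjoint_disjointed G)
  intro n
  obtain ⟨x, y, hxy⟩ := hrk n
  exact ⟨x, y, indep_restrict hRN (hGm n) (MeasurableSet.disjointed hGm n)
    (by rw [aeSub, Set.diff_eq_empty.mpr (disjointed_subset G n), measure_empty]) hxy⟩

lemma rankGe2_union (hRN : IsRNModule μ sm nrm) (hcomp : CompleteRN μ nrm)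
    [IsFiniteMeasure μ] {A B : Set Ω} (hA : MeasurableSet A) (hB : MeasurableSet B)
    (hrkA : RankGe2 sm A) (hrkB : RankGe2 sm B) : RankGe2 sm (A ∪ B) := by
  have : A ∪ B = ⋃ n : ℕ, (if n = 0 then A else B) := by
    ext ω
    simp only [Set.mem_union, Set.mem_iUnion]
    constructor
    · rintro (h | h)
      · exact ⟨0, by simpa using h⟩
      · exact ⟨1, by simpa using h⟩
    · rintro ⟨n, hn⟩
      by_cases h : n = 0
      · rw [h] at hn; simp at hn; exact Or.inl hn
      · rw [if_neg h] at hn; exact Or.inr hn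
  rw [this]
  exact rankGe2_iUnion hRN hcomp (fun n => by by_cases h : n = 0 <;> simp [h, hA, hB])
    (fun n => by by_cases h : n = 0 <;> simp [h, hrkA, hrkB])

end Aux

/-- **Proposition 2.2(2).** If `Rank_E(S) ≥ 2` for some positive-probability `E ⊂ H(S)`,
then there is a unique (mod null sets) `G` with `E ⊂ G ⊂ H(S)`, `P(G) > 0`,
`Rank_G(S) ≥ 2`, and `Rank_D(S) < 2` for every positive-probability `D ⊂ H(S) \ G`. -/
theorem exists_unique_GSet {Ω : Type*} [MeasurableSpace Ω] (μ : Measure Ω)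
    [IsProbabilityMeasure μ] {S : Type*} [AddCommGroup S]
    (sm : L0 μ → S → S) (nrm : S → L0 μ) (hRN : IsRNModule μ sm nrm)
    (hcomp : CompleteRN μ nrm) (H : Set Ω) (hH : IsSupport nrm H)
    (E : Set Ω) (hEm : MeasurableSet E) (hEH : aeSub μ E H) (hEpos : 0 < μ E)
    (hrk : RankGe2 sm E) :
    ∃ G : Set Ω, GSProp μ sm H E G ∧ ∀ G' : Set Ω, GSProp μ sm H E G' → aeEqS μ G G' := by
  classical
  set C : Set (Set Ω) := {D | MeasurableSet D ∧ aeSub μ D H ∧ RankGe2 sm D} with hC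
  have hEC : E ∈ C := ⟨hEm, hEH, hrk⟩
  set s : ENNReal := ⨆ D ∈ C, μ D with hs
  have hsE : μ E ≤ s := le_biSup _ hEC
  have hs_le : s ≤ μ Set.univ := iSup₂_le fun D _ => measure_mono (Set.subset_univ D)
  have hs_ne_top : s ≠ ⊤ := ne_top_of_le_ne_top (measure_ne_top μ _) hs_le
  have hs_ne0 : s ≠ 0 := fun h => by rw [h] at hsE; exact hEpos.ne' (le_antisymm hsE zero_le)
  have hseq : ∀ n : ℕ, ∃ D ∈ C, s - (((n : ENNReal) + 1))⁻¹ < μ D := by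
    intro n
    have hlt : s - (((n : ENNReal) + 1))⁻¹ < s := by
      apply ENNReal.sub_lt_self hs_ne_top hs_ne0
      simp [ENNReal.inv_ne_zero]
    rw [hs] at hlt
    obtain ⟨D, hD⟩ := lt_iSup_iff.mp hlt
    obtain ⟨hDC, hD2⟩ := lt_iSup_iff.mp hD
    exact ⟨D, hDC, by rw [hs]; exact hD2⟩
  choose D hDC hDlt using hseq
  set G : Set Ω := ⋃ n, D n with hG
  have hGm : MeasurableSet G := MeasurableSet.iUnion fun n => (hDC n).1
  have hGH : aeSub μ G H := by
    rw [aeSub, hG, Set.iUnion_diff]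
    exact measure_iUnion_null fun n => (hDC n).2.1
  have hGrk : RankGe2 sm G := rankGe2_iUnion hRN hcomp (fun n => (hDC n).1)
    (fun n => (hDC n).2.2)
  have hGC : G ∈ C := ⟨hGm, hGH, hGrk⟩
  have hGle : μ G ≤ s := le_biSup _ hGC
  have hsle : s ≤ μ G := by
    apply ENNReal.le_of_forall_pos_le_add
    intro ε hε _
    obtain ⟨n, hn⟩ := ENNReal.exists_inv_nat_lt
      (show ((ε : ENNReal)) ≠ 0 by exact_mod_cast hε.ne')
    have h1 : ((n : ENNReal) + 1)⁻¹ ≤ ((n : ENNReal))⁻¹ :=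
      ENNReal.inv_le_inv.mpr (by simp)
    have h2 : s ≤ μ (D n) + ((n : ENNReal) + 1)⁻¹ :=
      tsub_le_iff_right.mp (le_of_lt (hDlt n))
    calc s ≤ μ (D n) + ((n : ENNReal) + 1)⁻¹ := h2
    _ ≤ μ G + (ε : ENNReal) := add_le_add (measure_mono (Set.subset_iUnion D n))
        (le_trans h1 (le_of_lt hn))
  have hGs : μ G = s := le_antisymm hGle hsle
  have hmax : ∀ D' ∈ C, μ (D' \ G) = 0 := by
    intro D' hD'
    have hunH : aeSub μ (G ∪ D') H := by
      rw [aeSub, Set.union_diff_distrib]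
      exact measure_union_null hGH hD'.2.1
    have hun : G ∪ D' ∈ C :=
      ⟨hGm.union hD'.1, hunH, rankGe2_union hRN hcomp hGm hD'.1 hGrk hD'.2.2⟩
    have h1 : μ (G ∪ D') ≤ s := le_biSup _ hun
    have h2 : μ (G ∪ D') = μ G + μ (D' \ G) := by
      rw [← Set.union_diff_self, measure_union disjoint_sdiff_right (hD'.1.diff hGm)]
    rw [h2, ← hGs] at h1
    have h3 : μ G + μ (D' \ G) ≤ μ G + 0 := by rwa [add_zero]
    exact le_antisymm ((ENNReal.add_le_add_iff_left (measure_ne_top μ G)).mp h3) zero_le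
  have hEG : aeSub μ E G := hmax E hEC
  have hGpos : 0 < μ G := by
    have h1 : μ (E ∩ G) + μ (E \ G) = μ E := measure_inter_add_diff E hGm
    rw [hEG, add_zero] at h1
    exact lt_of_lt_of_le hEpos (h1 ▸ measure_mono Set.inter_subset_right)
  have hneg : ∀ D' : Set Ω, MeasurableSet D' → aeSub μ D' (H \ G) → 0 < μ D' →
      ¬ RankGe2 sm D' := by
    intro D' hD'm hD'sub hD'pos hD'rk
    have hD'H : aeSub μ D' H := by
      refine measure_mono_null (fun ω hω => ?_) hD'sub
      exact ⟨hω.1, fun hc => hω.2 hc.1⟩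
    have h1 : μ (D' \ G) = 0 := hmax D' ⟨hD'm, hD'H, hD'rk⟩
    have h2 : μ (D' ∩ G) = 0 := by
      refine measure_mono_null (fun ω hω => ?_) hD'sub
      exact ⟨hω.1, fun hc => hc.2 hω.2⟩
    have h3 : μ (D' ∩ G) + μ (D' \ G) = μ D' := measure_inter_add_diff D' hGm
    rw [h1, h2, add_zero] at h3
    exact hD'pos.ne' h3.symm
  refine ⟨G, ⟨hGm, hEG, hGH, hGpos, hGrk, hneg⟩, ?_⟩
  intro G' hG'
  obtain ⟨hG'm, hEG', hG'H, hG'pos, hG'rk, hneg'⟩ := hG'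
  have key : ∀ (A B : Set Ω), MeasurableSet A → MeasurableSet B → aeSub μ A H →
      RankGe2 sm A →
      (∀ D', MeasurableSet D' → aeSub μ D' (H \ B) → 0 < μ D' → ¬ RankGe2 sm D') →
      μ (A \ B) = 0 := by
    intro A B hAm hBm hAH hArk hnegB
    by_contra hpos
    have hABm : MeasurableSet (A \ B) := hAm.diff hBm
    have hABsub : aeSub μ (A \ B) (H \ B) := by
      refine measure_mono_null (fun ω hω => ?_) hAH
      exact ⟨hω.1.1, fun hc => hω.2 ⟨hc, hω.1.2⟩⟩
    have hABrk : RankGe2 sm (A \ B) := by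
      obtain ⟨x, y, hxy⟩ := hArk
      exact ⟨x, y, indep_restrict hRN hAm hABm
        (by rw [aeSub, Set.diff_eq_empty.mpr Set.diff_subset, measure_empty]) hxy⟩
    exact hnegB (A \ B) hABm hABsub (pos_iff_ne_zero.mpr hpos) hABrk
  have u1 : μ (G \ G') = 0 := key G G' hGm hG'm hGH hGrk hneg'
  have u2 : μ (G' \ G) = 0 := key G' G hG'm hGm hG'H hG'rk hneg
  rw [aeEqS]
  exact measure_union_null u1 u2

end RNM
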